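/- Let P ∈ ℝ^{d×r} be column orthonormal with r ≤ d, and let v be a d-dimensional Gaussian random vector with mean zero and covariance matrix PPᵀ. Then E[vvᵀ/(vᵀv)] = PPᵀ/r. -/

import Mathlib

open Matrix MeasureTheory ProbabilityTheory

namespace ExpNorm

variable {r : ℕ}

noncomputable def μr (r : ℕ) : Measure (Fin r → ℝ) := Measure.pi fun _ : Fin r => gaussianReal 0 1

noncomputable def F (k l : Fin r) : (Fin r → ℝ) → ℝ := fun x => x k * x l / ∑ i, x i * x i

lemma F_meas (k l : Fin r) : Measurable (F k l) :=
  ((measurable_pi_apply k).mul (measurable_pi_apply l)).div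
    (Finset.measurable_sum _ fun i _ => (measurable_pi_apply i).mul (measurable_pi_apply i))

lemma sum_sq_nonneg (x : Fin r → ℝ) : 0 ≤ ∑ i, x i * x i :=
  Finset.sum_nonneg fun i _ => mul_self_nonneg _

lemma F_bound (k l : Fin r) (x : Fin r → ℝ) : ‖F k l x‖ ≤ 1 := by
  have hS := sum_sq_nonneg x
  rcases eq_or_lt_of_le hS with h | h
  · simp [F, ← h]
  · have hk : x k * x k ≤ ∑ i, x i * x i :=
      Finset.single_le_sum (fun i _ => mul_self_nonneg (x i)) (Finset.mem_univ k)
    have hl : x l * x l ≤ ∑ i, x i * x i :=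
      Finset.single_le_sum (fun i _ => mul_self_nonneg (x i)) (Finset.mem_univ l)
    rw [Real.norm_eq_abs, F, abs_div, abs_of_pos h, div_le_one h, abs_le]
    constructor <;> nlinarith [sq_nonneg (x k + x l), sq_nonneg (x k - x l)]

instance : IsProbabilityMeasure (μr r) := by
  unfold μr; infer_instance

lemma F_integrable (k l : Fin r) : Integrable (F k l) (μr r) :=
  (integrable_const (1:ℝ)).mono' (F_meas k l).aestronglyMeasurable (ae_of_all _ (F_bound k l))

/-- permutations of coordinates preserve the iid gaussian measure -/
lemma perm_preserving (e : Fin r ≃ Fin r) :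
    MeasurePreserving (fun x : Fin r → ℝ => x ∘ e) (μr r) (μr r) := by
  have hmeas : Measurable (fun x : Fin r → ℝ => x ∘ e) :=
    measurable_pi_iff.mpr fun i => measurable_pi_apply (e i)
  refine ⟨hmeas, ?_⟩
  refine (Measure.pi_eq fun s hs => ?_).symm
  rw [Measure.map_apply hmeas (MeasurableSet.univ_pi hs)]
  have hpre : (fun x : Fin r → ℝ => x ∘ e) ⁻¹' Set.pi Set.univ s
      = Set.pi Set.univ (fun j => s (e.symm j)) := by
    ext x
    simp only [Set.mem_preimage, Set.mem_pi, Set.mem_univ, forall_true_left, Function.comp]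
    constructor
    · intro h j; simpa using h (e.symm j)
    · intro h i; simpa using h (e i)
  rw [hpre]
  unfold μr
  rw [Measure.pi_pi]
  exact Fintype.prod_equiv e.symm _ _ fun j => rfl

lemma neg_preserving (k : Fin r) :
    MeasurePreserving (fun (x : Fin r → ℝ) i => if i = k then -(x i) else x i) (μr r) (μr r) := by
  have hneg : MeasurePreserving (fun t : ℝ => -t) (gaussianReal 0 1) (gaussianReal 0 1) := by
    refine ⟨measurable_neg, ?_⟩
    have := gaussianReal_map_const_mul (μ := 0) (v := 1) (-1)
    have h2 : ((-1 : ℝ) * ·) = (fun t : ℝ => -t) := by funext t; simp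
    rw [h2] at this
    rw [this]
    norm_num
  have := measurePreserving_pi (fun _ : Fin r => gaussianReal 0 1)
    (fun _ : Fin r => gaussianReal 0 1)
    (f := fun i : Fin r => if i = k then (fun t : ℝ => -t) else id)
    (fun i => by by_cases h : i = k <;> simp [h, hneg, MeasurePreserving.id])
  convert this using 2 with x
  funext i
  by_cases h : i = k <;> simp [h]
  all_goals rfl

lemma integral_F_off_diag {k l : Fin r} (hkl : k ≠ l) : ∫ x, F k l x ∂(μr r) = 0 := by
  have hT := neg_preserving k
  have key : ∫ x, F k l x ∂(μr r) = ∫ x, - F k l x ∂(μr r) := by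
    calc ∫ x, F k l x ∂(μr r) = ∫ x, F k l x ∂((μr r).map _) := by rw [hT.map_eq]
    _ = ∫ x, F k l ((fun (x : Fin r → ℝ) i => if i = k then -(x i) else x i) x) ∂(μr r) :=
        integral_map hT.measurable.aemeasurable (F_meas k l).aestronglyMeasurable
    _ = ∫ x, - F k l x ∂(μr r) := by
        refine integral_congr_ae (ae_of_all _ fun x => ?_)
        have hden : ∑ i, (if i = k then -(x i) else x i) * (if i = k then -(x i) else x i)
            = ∑ i, x i * x i := by
          refine Finset.sum_congr rfl fun i _ => ?_
          by_cases h : i = k <;> simp [h]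
        simp only [F, hden, if_neg (Ne.symm hkl), eq_self_iff_true, if_true]
        rw [neg_mul, neg_div]
  have := integral_neg (f := F k l) (μ := μr r)
  rw [this] at key
  linarith

lemma ae_sum_sq_pos (hr : 0 < r) :
    ∀ᵐ x ∂(μr r), ∑ i, x i * x i ≠ 0 := by
  have h0 : (μr r) {x : Fin r → ℝ | ∑ i, x i * x i = 0} = 0 := by
    have hsub : {x : Fin r → ℝ | ∑ i, x i * x i = 0}
        ⊆ Function.eval (⟨0, hr⟩ : Fin r) ⁻¹' ({0} : Set ℝ) := by
      intro x hx
      have := (Finset.sum_eq_zero_iff_of_nonneg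
        (fun i _ => mul_self_nonneg (x i))).mp hx (⟨0, hr⟩) (Finset.mem_univ _)
      have : x ⟨0, hr⟩ = 0 := by nlinarith [this]
      simpa using this
    refine measure_mono_null hsub ?_
    exact Measure.pi_eval_preimage_null (fun _ => gaussianReal 0 1)
      ((gaussianReal_absolutelyContinuous 0 one_ne_zero) (measure_singleton 0))
  rw [ae_iff]
  simpa using h0

lemma integral_F_diag (hr : 0 < r) (k : Fin r) : ∫ x, F k k x ∂(μr r) = 1 / r := by
  set k0 : Fin r := ⟨0, hr⟩
  -- all diagonal integrals equal
  have hsym : ∀ m : Fin r, ∫ x, F m m x ∂(μr r) = ∫ x, F k0 k0 x ∂(μr r) := by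
    intro m
    have hT := perm_preserving (r := r) (Equiv.swap m k0)
    calc ∫ x, F m m x ∂(μr r)
        = ∫ x, F m m x ∂((μr r).map _) := by rw [hT.map_eq]
      _ = ∫ x, F m m (x ∘ (Equiv.swap m k0)) ∂(μr r) :=
          integral_map hT.measurable.aemeasurable (F_meas m m).aestronglyMeasurable
      _ = ∫ x, F k0 k0 x ∂(μr r) := by
          refine integral_congr_ae (ae_of_all _ fun x => ?_)
          have hden : ∑ i, x (Equiv.swap m k0 i) * x (Equiv.swap m k0 i) = ∑ i, x i * x i :=
            Equiv.sum_comp (Equiv.swap m k0) (fun j => x j * x j)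
          simp only [F, Function.comp, hden, Equiv.swap_apply_left]
  have hsum : ∑ m : Fin r, ∫ x, F m m x ∂(μr r) = 1 := by
    rw [← integral_finset_sum _ (fun m _ => F_integrable m m)]
    have : ∫ x, ∑ m, F m m x ∂(μr r) = ∫ _x, (1:ℝ) ∂(μr r) := by
      refine integral_congr_ae ?_
      filter_upwards [ae_sum_sq_pos hr] with x hx
      simp only [F, ← Finset.sum_div]
      exact div_self hx
    rw [this]; simp
  rw [hsym k] at *
  have : (r : ℝ) * ∫ x, F k0 k0 x ∂(μr r) = 1 := by
    rw [← hsum]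
    simp [hsym, Finset.sum_const, nsmul_eq_mul]
  field_simp at this ⊢
  linarith

end ExpNorm

open ExpNorm in
/-- **Lemma A.1**: if `P ∈ ℝ^{d×r}` is column orthonormal and `v ∼ N_d(0, PPᵀ)`
(i.e. `v = Pw` with `w` a standard Gaussian vector in `ℝ^r`), then
`E[vvᵀ/(vᵀv)] = PPᵀ/r` entrywise. -/
theorem expectation_normalized_outer_product {d r : ℕ} (hr : 0 < r) (hrd : r ≤ d)
    (P : Matrix (Fin d) (Fin r) ℝ) (hP : Pᵀ * P = 1)
    {Ω : Type*} [MeasureSpace Ω] [IsProbabilityMeasure (ℙ : Measure Ω)]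
    (w : Ω → Fin r → ℝ)
    (hw : Measure.map w ℙ = Measure.pi fun _ : Fin r => gaussianReal 0 1)
    (v : Ω → Fin d → ℝ) (hv : ∀ ω, v ω = P.mulVec (w ω)) :
    ∀ i j : Fin d,
      (∫ ω, v ω i * v ω j / (∑ l, v ω l * v ω l) ∂ℙ) = (P * Pᵀ) i j / r := by
  intro i j
  have hwm : AEMeasurable w ℙ := by
    by_contra h
    rw [Measure.map_of_not_aemeasurable h] at hw
    have : (0 : Measure (Fin r → ℝ)) Set.univ = 1 := by
      rw [hw]; exact measure_univ
    simp at this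
  have hwμ : Measure.map w ℙ = μr r := hw
  -- denominator identity
  have hden : ∀ x : Fin r → ℝ, ∑ l, P.mulVec x l * P.mulVec x l = ∑ k, x k * x k := by
    intro x
    have h1 : P.mulVec x ⬝ᵥ P.mulVec x = x ⬝ᵥ x := by
      rw [Matrix.dotProduct_mulVec, ← Matrix.mulVec_transpose, Matrix.mulVec_mulVec, hP,
        Matrix.one_mulVec]
    simpa [dotProduct] using h1
  -- pointwise expansion of the integrand
  have hpt : ∀ ω, v ω i * v ω j / (∑ l, v ω l * v ω l)
      = ∑ k : Fin r, ∑ l : Fin r, P i k * P j l * F k l (w ω) := by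
    intro ω
    rw [hv ω, hden (w ω)]
    set x := w ω
    have hnum : P.mulVec x i * P.mulVec x j
        = ∑ k : Fin r, ∑ l : Fin r, P i k * P j l * (x k * x l) := by
      simp only [Matrix.mulVec, dotProduct, Finset.sum_mul_sum]
      refine Finset.sum_congr rfl fun k _ => Finset.sum_congr rfl fun l _ => by ring
    rw [hnum, Finset.sum_div]
    refine Finset.sum_congr rfl fun k _ => ?_
    rw [Finset.sum_div]
    refine Finset.sum_congr rfl fun l _ => ?_
    rw [F, mul_div_assoc]
  simp only [hpt]
  -- integrability of each term
  have hFint : ∀ k l : Fin r, Integrable (fun ω => F k l (w ω)) ℙ :=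
    fun k l => (integrable_const (1:ℝ)).mono'
      ((F_meas k l).comp_aemeasurable hwm).aestronglyMeasurable
      (ae_of_all _ fun ω => F_bound k l (w ω))
  have hterm : ∀ k l : Fin r, Integrable (fun ω => P i k * P j l * F k l (w ω)) ℙ :=
    fun k l => (hFint k l).const_mul _
  rw [integral_finset_sum _ (fun k _ => integrable_finset_sum _ (fun l _ => hterm k l))]
  have hchg : ∀ k l : Fin r, ∫ ω, F k l (w ω) ∂ℙ = ∫ x, F k l x ∂(μr r) := by
    intro k l
    rw [← hwμ, integral_map hwm (F_meas k l).aestronglyMeasurable]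
  have hval : ∀ k l : Fin r, ∫ ω, F k l (w ω) ∂ℙ = if k = l then 1 / (r:ℝ) else 0 := by
    intro k l
    rw [hchg]
    by_cases h : k = l
    · subst h; rw [if_pos rfl]; exact integral_F_diag hr k
    · rw [if_neg h]; exact integral_F_off_diag h
  have : ∀ k : Fin r, ∫ ω, ∑ l : Fin r, P i k * P j l * F k l (w ω) ∂ℙ
      = P i k * P j k * (1 / r) := by
    intro k
    rw [integral_finset_sum _ (fun l _ => hterm k l)]
    have : ∀ l : Fin r, ∫ ω, P i k * P j l * F k l (w ω) ∂ℙ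
        = P i k * P j l * (if k = l then 1 / (r:ℝ) else 0) := by
      intro l
      rw [← hval k l, ← integral_const_mul]
    simp only [this, mul_ite, mul_zero]
    simp
  simp only [this]
  rw [Matrix.mul_apply]
  simp only [Matrix.transpose_apply, mul_one_div]
  rw [← Finset.sum_div]
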